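/- arXiv:2305.00184 — 3 statements merged into one kernel-verified Lean document; each statement's English description precedes it below -/
import Mathlib

section
/- Under the setting of the previous prefix-interval model, the greedy algorithm that processes requests in non-decreasing order of h_r and places each request at the lowest level with remaining capacity produces a feasible placement whenever the prefix-sum condition holds. -/
open Finset

/-- Load of a partial placement at level `j`. -/
def ffLoad {R : Type*} [Fintype R] [DecidableEq R] (y : R → Option ℕ) (j : ℕ) : ℕ :=
  (univ.filter (fun r => y r = some j)).card

/-- Lowest level `j ≤ hr` whose load is strictly below its capacity. -/
def lowestFree (C : ℕ → ℕ) (load : ℕ → ℕ) (hr : ℕ) : Option ℕ :=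
  (List.range (hr + 1)).find? (fun j => decide (load j < C j))

/-- Place one request at the lowest level with residual capacity within its
range (doing nothing if no such level exists). -/
lemma ffLoad_update {R : Type*} [Fintype R] [DecidableEq R]
    (y : R → Option ℕ) (r : R) (hy : y r = none) (j j' : ℕ) :
    ffLoad (Function.update y r (some j)) j' =
      ffLoad y j' + if j = j' then 1 else 0 := by
  classical
  unfold ffLoad
  by_cases hjj : j = j'
  · subst hjj
    have hset : univ.filter (fun r' => Function.update y r (some j) r' = some j)
        = insert r (univ.filter (fun r' => y r' = some j)) := by
      ext r'
      by_cases hr : r' = r <;> simp [Function.update_apply, hr, hy]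
    rw [hset, Finset.card_insert_of_notMem (by simp [hy]), if_pos rfl]
  · have hset : univ.filter (fun r' => Function.update y r (some j) r' = some j')
        = univ.filter (fun r' => y r' = some j') := by
      ext r'
      by_cases hr : r' = r <;> simp [Function.update_apply, hr, hy, hjj]
    rw [hset, if_neg hjj, Nat.add_zero]

lemma sum_ffLoad {R : Type*} [Fintype R] [DecidableEq R] (y : R → Option ℕ) (ℓ : ℕ) :
    ∑ j ∈ Finset.range (ℓ + 1), ffLoad y j
      = (univ.filter (fun r => ∃ j' ≤ ℓ, y r = some j')).card := by
  classical
  unfold ffLoad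
  rw [← Finset.card_biUnion]
  · congr 1
    ext r
    simp only [Finset.mem_biUnion, Finset.mem_range, Finset.mem_filter, Finset.mem_univ,
      true_and, Nat.lt_succ_iff]
  · intro a _ b _ hab
    simp only [Finset.disjoint_left, Finset.mem_filter, Finset.mem_univ, true_and]
    intro r hra hrb
    rw [hra] at hrb
    exact hab (Option.some.inj hrb)

lemma lowestFree_some {C load : ℕ → ℕ} {hr j : ℕ}
    (h : lowestFree C load hr = some j) : j ≤ hr ∧ load j < C j := by
  unfold lowestFree at h
  have h1 := List.find?_some h
  have h2 := List.mem_of_find?_eq_some h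
  simp only [List.mem_range, Nat.lt_succ_iff] at h2
  simp only [decide_eq_true_eq] at h1
  exact ⟨h2, h1⟩

lemma lowestFree_none {C load : ℕ → ℕ} {hr : ℕ}
    (h : lowestFree C load hr = none) : ∀ j ≤ hr, C j ≤ load j := by
  intro j hj
  unfold lowestFree at h
  rw [List.find?_eq_none] at h
  have := h j (by simp [List.mem_range, Nat.lt_succ_iff, hj])
  simpa using this

def ffStep {R : Type*} [Fintype R] [DecidableEq R] (C : ℕ → ℕ) (h : R → ℕ)
    (y : R → Option ℕ) (r : R) : R → Option ℕ :=
  match lowestFree C (ffLoad y) (h r) with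
  | some j => Function.update y r (some j)
  | none => y

/-- Greedy/first-fit: process the requests in the order of the list `l`,
placing each at the lowest level with residual capacity in its range. -/
def ffGreedy {R : Type*} [Fintype R] [DecidableEq R] (C : ℕ → ℕ) (h : R → ℕ)
    (l : List R) : R → Option ℕ :=
  l.foldl (ffStep C h) (fun _ => none)

lemma ffMain {R : Type*} [Fintype R] [DecidableEq R]
    (L : ℕ) (C : ℕ → ℕ) (h : R → ℕ) (hh : ∀ r, h r ≤ L)
    (hprefix : ∀ ℓ ≤ L,
      (univ.filter (fun r => h r ≤ ℓ)).card ≤ ∑ j ∈ Finset.range (ℓ + 1), C j) :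
    ∀ (l : List R) (y : R → Option ℕ),
      l.Pairwise (fun a b => h a ≤ h b) → l.Nodup →
      (∀ r, y r = none ↔ r ∈ l) →
      (∀ r j, y r = some j → j ≤ h r) →
      (∀ r, r ∉ l → ∀ r' ∈ l, h r ≤ h r') →
      (∀ j, ffLoad y j ≤ C j) →
      (∀ r, ∃ j, l.foldl (ffStep C h) y r = some j ∧ j ≤ h r) ∧
      (∀ j, ffLoad (l.foldl (ffStep C h) y) j ≤ C j) := by
  intro l
  induction l with
  | nil =>
    intro y _ _ hnone hval _ hload
    refine ⟨fun r => ?_, hload⟩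
    cases hy : y r with
    | none => exact absurd ((hnone r).mp hy) (by simp)
    | some j => exact ⟨j, hy, hval r j hy⟩
  | cons r₀ t ih =>
    intro y hsort hnd hnone hval hmono hload
    set ℓ := h r₀ with hℓ
    have hy₀ : y r₀ = none := (hnone r₀).mpr List.mem_cons_self
    have hfind : ∃ j, lowestFree C (ffLoad y) ℓ = some j := by
      by_contra hcon
      push_neg at hcon
      have hn : lowestFree C (ffLoad y) ℓ = none := by
        cases hfl : lowestFree C (ffLoad y) ℓ with
        | none => rfl
        | some j => exact absurd hfl (hcon j)
      have hge := lowestFree_none hn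
      have hsum : ∑ j ∈ Finset.range (ℓ + 1), C j ≤ ∑ j ∈ Finset.range (ℓ + 1), ffLoad y j :=
        Finset.sum_le_sum (fun j hj => hge j (Nat.lt_succ_iff.mp (Finset.mem_range.mp hj)))
      rw [sum_ffLoad] at hsum
      have hss : (univ.filter (fun r => ∃ j' ≤ ℓ, y r = some j'))
          ⊂ (univ.filter (fun r => h r ≤ ℓ)) := by
        constructor
        · intro r hr
          simp only [Finset.mem_filter, Finset.mem_univ, true_and] at hr ⊢
          obtain ⟨j', _, hyr⟩ := hr
          have hrnot : r ∉ (r₀ :: t) := by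
            intro hmem
            rw [(hnone r).mpr hmem] at hyr
            exact nomatch hyr
          exact hmono r hrnot r₀ List.mem_cons_self
        · intro hsub
          have hr₀mem : r₀ ∈ univ.filter (fun r => h r ≤ ℓ) := by simp [hℓ]
          have hm := hsub hr₀mem
          simp only [Finset.mem_filter, Finset.mem_univ, true_and] at hm
          obtain ⟨j', _, hyr⟩ := hm
          rw [hy₀] at hyr
          exact nomatch hyr
      have hlt := Finset.card_lt_card hss
      have hpre := hprefix ℓ (hh r₀)
      omega
    obtain ⟨j₀, hj₀⟩ := hfind
    obtain ⟨hj₀le, hj₀lt⟩ := lowestFree_some hj₀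
    have hstep : ffStep C h y r₀ = Function.update y r₀ (some j₀) := by
      unfold ffStep
      rw [← hℓ, hj₀]
    rw [List.foldl_cons, hstep]
    have hnd' := List.nodup_cons.mp hnd
    apply ih (Function.update y r₀ (some j₀)) hsort.of_cons hnd'.2
    · intro r
      by_cases hr : r = r₀
      · subst hr
        simp only [Function.update_self]
        constructor
        · intro hc; exact nomatch hc
        · intro hmem; exact absurd hmem hnd'.1
      · rw [Function.update_of_ne hr, hnone r]
        simp [List.mem_cons, hr]
    · intro r j hj
      by_cases hr : r = r₀
      · subst hr
        rw [Function.update_self] at hj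
        have := Option.some.inj hj
        omega
      · rw [Function.update_of_ne hr] at hj
        exact hval r j hj
    · intro r hrt r' hr'
      by_cases hr : r = r₀
      · subst hr
        exact (List.pairwise_cons.mp hsort).1 r' hr'
      · exact hmono r (by simp [List.mem_cons, hr, hrt]) r' (List.mem_cons_of_mem _ hr')
    · intro j
      rw [ffLoad_update y r₀ hy₀]
      by_cases hjj : j₀ = j
      · subst hjj
        simpa using hj₀lt
      · simpa [hjj] using hload j

/-- if the requests are processed in non-decreasing order of their
thresholds and the prefix-sum condition holds, the greedy (place each request
as low as possible) places every request and the result is feasible. -/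
theorem stmt5 {R : Type*} [Fintype R] [DecidableEq R]
    (L : ℕ) (C : ℕ → ℕ) (h : R → ℕ) (hh : ∀ r, h r ≤ L)
    (l : List R) (hnodup : l.Nodup) (hall : ∀ r : R, r ∈ l)
    (hsorted : l.Pairwise (fun a b => h a ≤ h b))
    (hprefix : ∀ ℓ ≤ L,
      (univ.filter (fun r => h r ≤ ℓ)).card ≤ ∑ j ∈ Finset.range (ℓ + 1), C j) :
    (∀ r, ∃ j, ffGreedy C h l r = some j ∧ j ≤ h r) ∧
    (∀ j, (univ.filter (fun r => ffGreedy C h l r = some j)).card ≤ C j) := by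
  have init := ffMain L C h hh hprefix l (fun _ => none) hsorted hnodup
    (fun r => ⟨fun _ => hall r, fun _ => rfl⟩)
    (fun r j hj => by simp at hj)
    (fun r hr => absurd (hall r) hr)
    (fun j => by simp [ffLoad])
  exact init
end

section
/- In the prefix-interval model with unit demands, if the greedy algorithm (sorted by non-decreasing h_r, place as low as possible) fails on some request r, then no feasible placement exists: specifically, at the moment of failure all levels j ≤ h_r are full with requests r' having h_{r'} ≤ h_r, violating the prefix-sum condition at level h_r. -/
open Finset

lemma ffStep_ne {R : Type*} [Fintype R] [DecidableEq R] (C : ℕ → ℕ) (h : R → ℕ)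
    (y : R → Option ℕ) (s r : R) (hne : r ≠ s) :
    ffStep C h y s r = y r := by
  rw [ffStep]
  cases lowestFree C (ffLoad y) (h s) with
  | none => rfl
  | some j => exact Function.update_of_ne hne _ _

lemma ffStep_foldl_ne {R : Type*} [Fintype R] [DecidableEq R] (C : ℕ → ℕ) (h : R → ℕ)
    (l : List R) (y : R → Option ℕ) (r : R) (hr : r ∉ l) :
    l.foldl (ffStep C h) y r = y r := by
  induction l generalizing y with
  | nil => rfl
  | cons s t ih =>
      simp only [List.mem_cons, not_or] at hr
      rw [List.foldl_cons, ih _ hr.2, ffStep_ne C h y s r hr.1]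

/-- if the greedy (sorted by non-decreasing thresholds, place as
low as possible) fails on some request `r`, then the prefix-sum condition is
violated at level `h r` and hence no feasible placement exists at all. -/
theorem stmt6 {R : Type*} [Fintype R] [DecidableEq R]
    (L : ℕ) (C : ℕ → ℕ) (h : R → ℕ) (hh : ∀ r, h r ≤ L)
    (l : List R) (hnodup : l.Nodup) (hall : ∀ r : R, r ∈ l)
    (hsorted : l.Pairwise (fun a b => h a ≤ h b))
    (hfail : ∃ r, ffGreedy C h l r = none) :
    (∃ r, ffGreedy C h l r = none ∧
      (∑ j ∈ Finset.range (h r + 1), C j) < (univ.filter (fun r' => h r' ≤ h r)).card) ∧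
    ¬ ∃ y : R → ℕ, (∀ r, y r ≤ h r) ∧
        ∀ j, (univ.filter (fun r => y r = j)).card ≤ C j := by
  obtain ⟨r, hr⟩ := hfail
  obtain ⟨a, b, rfl⟩ := List.append_of_mem (hall r)
  have hra : r ∉ a := by
    have := hnodup
    rw [List.nodup_append] at this
    exact fun hx => this.2.2 r hx r List.mem_cons_self rfl
  have hrb : r ∉ b := by
    have := hnodup
    rw [List.nodup_append] at this
    exact (List.nodup_cons.mp this.2.1).1
  set ya := a.foldl (ffStep C h) (fun _ => none) with hya
  have hfr : ffStep C h ya r r = none := by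
    have h1 := hr
    rw [ffGreedy, List.foldl_append, List.foldl_cons,
      ffStep_foldl_ne C h b _ r hrb] at h1
    exact h1
  have hlf : lowestFree C (ffLoad ya) (h r) = none := by
    rcases hlf : lowestFree C (ffLoad ya) (h r) with _ | j
    · rfl
    · exfalso
      rw [ffStep, hlf] at hfr
      simp [Function.update_self] at hfr
  have hload : ∀ j ≤ h r, C j ≤ ffLoad ya j := by
    intro j hj
    have := List.find?_eq_none.mp hlf j (by simp [List.mem_range]; omega)
    simp at this
    omega
  have hyar : ya r = none := by
    rw [hya, ffStep_foldl_ne C h a _ r hra]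
  have hmem : ∀ r' j, ya r' = some j → r' ∈ a := by
    intro r' j hj
    by_contra hna
    rw [hya, ffStep_foldl_ne C h a _ r' hna] at hj
    exact nomatch hj
  have hha : ∀ r' ∈ a, h r' ≤ h r := by
    intro r' hr'
    exact (List.pairwise_append.mp hsorted).2.2 r' hr' r List.mem_cons_self
  have hkey : (∑ j ∈ Finset.range (h r + 1), C j) <
      (univ.filter (fun r' => h r' ≤ h r)).card := by
    set U : Finset R :=
      (Finset.range (h r + 1)).biUnion
        (fun j => univ.filter (fun r' => ya r' = some j)) with hUdef
    have hUsub : insert r U ⊆ univ.filter (fun r' => h r' ≤ h r) := by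
      intro x hx
      simp only [mem_insert, hUdef, mem_biUnion, mem_filter, mem_univ, true_and,
        Finset.mem_range] at hx ⊢
      rcases hx with rfl | ⟨j, _, hx⟩
      · exact le_refl _
      · exact hha x (hmem x j hx)
    have hrU : r ∉ U := by
      simp [hUdef, hyar]
    have hcardU : U.card = ∑ j ∈ Finset.range (h r + 1),
        (univ.filter (fun r' => ya r' = some j)).card := by
      apply Finset.card_biUnion
      intro i _ j _ hij
      simp only [Finset.disjoint_left, mem_filter, mem_univ, true_and]
      rintro x hx1 hx2
      rw [hx1] at hx2
      exact hij (Option.some.inj hx2)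
    have hsum : (∑ j ∈ Finset.range (h r + 1), C j) ≤ U.card := by
      rw [hcardU]
      apply Finset.sum_le_sum
      intro j hj
      exact hload j (by simpa using Nat.lt_succ_iff.mp (Finset.mem_range.mp hj))
    calc (∑ j ∈ Finset.range (h r + 1), C j) ≤ U.card := hsum
      _ < (insert r U).card := by rw [Finset.card_insert_of_notMem hrU]; omega
      _ ≤ _ := Finset.card_le_card hUsub
  refine ⟨⟨r, hr, hkey⟩, ?_⟩
  rintro ⟨y, hy1, hy2⟩
  have hle : (univ.filter (fun r' => h r' ≤ h r)).card ≤
      ∑ j ∈ Finset.range (h r + 1), C j := by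
    calc (univ.filter (fun r' => h r' ≤ h r)).card
        ≤ ((Finset.range (h r + 1)).biUnion
            (fun j => univ.filter (fun r' => y r' = j))).card := by
          apply Finset.card_le_card
          intro x hx
          simp only [mem_filter, mem_univ, true_and] at hx
          simp only [mem_biUnion, mem_filter, mem_univ, true_and, Finset.mem_range]
          exact ⟨y x, by have := hy1 x; omega, rfl⟩
      _ ≤ ∑ j ∈ Finset.range (h r + 1),
            (univ.filter (fun r' => y r' = j)).card := Finset.card_biUnion_le
      _ ≤ ∑ j ∈ Finset.range (h r + 1), C j :=
          Finset.sum_le_sum (fun j _ => hy2 j)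
  omega
end

section
/- In the prefix-interval model with unit demands and strictly decreasing per-level cost ψ, an optimal (minimum-cost) feasible placement is obtained by: for levels ℓ = L down to 0, greedily filling level ℓ with as many requests as possible among those with h_r ≥ ℓ that are not yet placed, subject to capacity C_ℓ and to leaving enough requests to keep the remaining instance feasible. Equivalently, the maximum number of requests placeable at levels ≥ ℓ, over all feasible placements, is achieved simultaneously for all ℓ by a single placement. -/
open Finset

/-- Feasibility of a placement in the prefix-interval model. -/
def pFeasible {R : Type*} [Fintype R] [DecidableEq R] (C : ℕ → ℕ) (h : R → ℕ)
    (y : R → ℕ) : Prop :=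
  (∀ r, y r ≤ h r) ∧ ∀ j, (univ.filter (fun r => y r = j)).card ≤ C j

section Aux

variable {R : Type*} [Fintype R] [DecidableEq R] (C : ℕ → ℕ) (h : R → ℕ)

/-- count of requests at levels `≥ ℓ`. -/
def nCount (y : R → ℕ) (ℓ : ℕ) : ℕ := (univ.filter (fun r => ℓ ≤ y r)).card

/-- `y` is feasible and maximizes the count at each level `≥ ℓ`. -/
def POpt (ℓ : ℕ) (y : R → ℕ) : Prop :=
  pFeasible C h y ∧ ∀ t, ℓ ≤ t → ∀ y' : R → ℕ, pFeasible C h y' →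
    nCount y' t ≤ nCount y t

/-- splitting the count at `≥ m` into `= m` plus `≥ m+1`. -/
lemma nCount_split (y : R → ℕ) (m : ℕ) :
    nCount y m = (univ.filter (fun r => y r = m)).card + nCount y (m + 1) := by
  unfold nCount
  rw [← Finset.card_union_of_disjoint]
  · congr 1
    ext r
    simp only [mem_union, mem_filter, mem_univ, true_and]
    omega
  · rw [Finset.disjoint_left]
    intro r hr hr'
    simp only [mem_filter, mem_univ, true_and] at hr hr'
    omega

/-- the exchange/greedy step. -/
lemma opt_step (m : ℕ) (y : R → ℕ) (hy : POpt C h (m + 1) y) :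
    ∃ y'', POpt C h m y'' := by
  obtain ⟨⟨hyb, hyc⟩, hmax⟩ := hy
  classical
  set A : Finset R := univ.filter (fun r => y r < m ∧ m ≤ h r) with hA
  set cm : ℕ := (univ.filter (fun r => y r = m)).card with hcm
  obtain ⟨S, hSA, hScard⟩ :=
    Finset.exists_subset_card_eq (s := A) (n := min (C m - cm) A.card) (min_le_right _ _)
  have hSlt : ∀ r ∈ S, y r < m ∧ m ≤ h r := by
    intro r hr
    have := hSA hr
    rw [hA, mem_filter] at this
    exact this.2
  set y'' : R → ℕ := fun r => if r ∈ S then m else y r with hy''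
  -- counts at levels ≥ m+1 are unchanged
  have hsame : ∀ t, m + 1 ≤ t →
      (univ.filter (fun r => t ≤ y'' r)) = (univ.filter (fun r => t ≤ y r)) := by
    intro t ht
    ext r
    simp only [mem_filter, mem_univ, true_and, hy'']
    by_cases hrS : r ∈ S
    · have := hSlt r hrS
      simp [hrS]
      omega
    · simp [hrS]
  -- level-m set
  have hmset : (univ.filter (fun r => m ≤ y'' r)) =
      (univ.filter (fun r => m ≤ y r)) ∪ S := by
    ext r
    simp only [mem_union, mem_filter, mem_univ, true_and, hy'']
    by_cases hrS : r ∈ S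
    · simp [hrS]
    · simp [hrS]
  have hmdisj : Disjoint (univ.filter (fun r => m ≤ y r)) S := by
    rw [Finset.disjoint_left]
    intro r hr hr'
    have := (hSlt r hr').1
    simp only [mem_filter, mem_univ, true_and] at hr
    omega
  have hcmC : cm ≤ C m := hyc m
  -- the key partition: {h ≥ m} = {y ≥ m+1} ∪ {y = m} ∪ A
  have hpart : (univ.filter (fun r => m ≤ h r)).card
      = nCount y (m + 1) + cm + A.card := by
    have hsplit : (univ.filter (fun r => m ≤ h r)) =
        (univ.filter (fun r => m + 1 ≤ y r)) ∪
          ((univ.filter (fun r => y r = m)) ∪ A) := by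
      ext r
      have := hyb r
      simp only [mem_union, mem_filter, mem_univ, true_and, hA]
      omega
    rw [hsplit, Finset.card_union_of_disjoint, Finset.card_union_of_disjoint]
    · unfold nCount
      rw [hcm]
      ring
    · rw [Finset.disjoint_left]
      intro r hr hr'
      simp only [mem_filter, mem_univ, true_and, hA] at hr hr'
      omega
    · rw [Finset.disjoint_left]
      intro r hr hr'
      simp only [mem_union, mem_filter, mem_univ, true_and, hA] at hr hr'
      omega
  refine ⟨y'', ⟨?_, ?_⟩, ?_⟩
  · -- y'' r ≤ h r
    intro r
    by_cases hrS : r ∈ S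
    · simp only [hy'', hrS, if_pos]
      exact (hSlt r hrS).2
    · simp only [hy'', hrS, if_neg, not_false_iff]
      exact hyb r
  · -- capacity constraints
    intro j
    by_cases hjm : j = m
    · rw [hjm]
      have : (univ.filter (fun r => y'' r = m)) =
          (univ.filter (fun r => y r = m)) ∪ S := by
        ext r
        simp only [mem_union, mem_filter, mem_univ, true_and, hy'']
        by_cases hrS : r ∈ S
        · simp [hrS]
        · simp [hrS]
      rw [this, Finset.card_union_of_disjoint]
      · have h1 : S.card ≤ C m - cm := hScard ▸ min_le_left _ _
        omega
      · rw [Finset.disjoint_left]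
        intro r hr hr'
        have := (hSlt r hr').1
        simp only [mem_filter, mem_univ, true_and] at hr
        omega
    · have hsub : (univ.filter (fun r => y'' r = j)) ⊆
          (univ.filter (fun r => y r = j)) := by
        intro r hr
        simp only [mem_filter, mem_univ, true_and, hy''] at hr ⊢
        by_cases hrS : r ∈ S
        · rw [if_pos hrS] at hr; exact absurd hr.symm hjm
        · rwa [if_neg hrS] at hr
      exact le_trans (Finset.card_le_card hsub) (hyc j)
  · -- maximality at all t ≥ m
    intro t ht y' hy'
    rcases Nat.lt_or_ge t (m + 1) with htm | htm
    · -- t = m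
      rw [show t = m by omega]
      have hn'' : nCount y'' m = nCount y m + S.card := by
        unfold nCount
        rw [hmset, Finset.card_union_of_disjoint hmdisj]
      have hnm : nCount y m = cm + nCount y (m + 1) := nCount_split y m
      -- upper bounds on nCount y' m
      have hub1 : nCount y' m ≤ C m + nCount y (m + 1) := by
        have := nCount_split y' m
        have h1 : (univ.filter (fun r => y' r = m)).card ≤ C m := hy'.2 m
        have h2 : nCount y' (m + 1) ≤ nCount y (m + 1) :=
          hmax (m + 1) le_rfl y' hy'
        omega
      have hub2 : nCount y' m ≤ (univ.filter (fun r => m ≤ h r)).card := by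
        apply Finset.card_le_card
        intro r hr
        simp only [mem_filter, mem_univ, true_and] at hr ⊢
        exact le_trans hr (hy'.1 r)
      rcases le_total (C m - cm) A.card with hc | hc
      · have : S.card = C m - cm := by rw [hScard, min_eq_left hc]
        omega
      · have : S.card = A.card := by rw [hScard, min_eq_right hc]
        omega
    · -- t ≥ m + 1
      have : nCount y'' t = nCount y t := by
        unfold nCount; rw [hsame t htm]
      rw [this]
      exact hmax t htm y' hy'

/-- existence of a simultaneously optimal placement. -/
lemma opt_exists (hfe : ∃ y : R → ℕ, pFeasible C h y) :
    ∃ y : R → ℕ, POpt C h 0 y := by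
  obtain ⟨y0, hy0⟩ := hfe
  set L : ℕ := univ.sup h with hL
  have hbound : ∀ y' : R → ℕ, pFeasible C h y' → ∀ r, y' r ≤ L := by
    intro y' hy' r
    exact le_trans (hy'.1 r) (Finset.le_sup (mem_univ r))
  have base : POpt C h (L + 1) y0 := by
    refine ⟨hy0, fun t ht y' hy' => ?_⟩
    have : (univ.filter (fun r => t ≤ y' r)) = ∅ := by
      rw [Finset.filter_eq_empty_iff]
      intro r _
      have := hbound y' hy' r
      omega
    unfold nCount
    rw [this]
    simp
  have down : ∀ d : ℕ, ∃ y : R → ℕ, POpt C h (L + 1 - d) y := by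
    intro d
    induction d with
    | zero => exact ⟨y0, base⟩
    | succ k ih =>
      obtain ⟨y, hy⟩ := ih
      rcases Nat.eq_zero_or_pos (L + 1 - k) with h0 | hpos
      · have he : L + 1 - (k + 1) = 0 := by omega
        rw [he, ← h0]
        exact ⟨y, hy⟩
      · have he : L + 1 - k = (L + 1 - (k + 1)) + 1 := by omega
        rw [he] at hy
        exact opt_step C h _ y hy
  obtain ⟨y, hy⟩ := down (L + 1)
  rw [Nat.sub_self] at hy
  exact ⟨y, hy⟩

/-- telescoping sum. -/
lemma tele (ψ : ℕ → ℝ) : ∀ a b : ℕ, a ≤ b →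
    ∑ j ∈ Finset.Ico a b, (ψ j - ψ (j + 1)) = ψ a - ψ b := by
  intro a b hab
  induction b, hab using Nat.le_induction with
  | base => simp
  | succ n hn ih =>
    rw [Finset.sum_Ico_succ_top hn, ih]
    ring

/-- Abel-summation cost comparison. -/
lemma cost_le (y y' : R → ℕ) (hy : pFeasible C h y) (hy' : pFeasible C h y')
    (hdom : ∀ ℓ : ℕ, nCount y' ℓ ≤ nCount y ℓ)
    (ψ : ℕ → ℝ) (hψ : StrictAnti ψ) :
    ∑ r, ψ (y r) ≤ ∑ r, ψ (y' r) := by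
  classical
  set L : ℕ := univ.sup h with hL
  have hb : ∀ r, y r ≤ L := fun r => le_trans (hy.1 r) (Finset.le_sup (mem_univ r))
  have hb' : ∀ r, y' r ≤ L := fun r => le_trans (hy'.1 r) (Finset.le_sup (mem_univ r))
  set d : ℕ → ℝ := fun j => ψ j - ψ (j + 1) with hd
  have hdpos : ∀ j, 0 ≤ d j := fun j => by
    have := hψ (Nat.lt_succ_self j)
    simp only [hd]
    linarith
  have key : ∀ z : R → ℕ, (∀ r, z r ≤ L) →
      ∑ r, ψ (z r) = (Fintype.card R : ℝ) * ψ L +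
        ∑ j ∈ Finset.range L,
          d j * ((Fintype.card R - nCount z (j + 1) : ℕ) : ℝ) := by
    intro z hz
    have hrw : ∀ r : R, ψ (z r) = ψ L + ∑ j ∈ Finset.range L,
        (if z r ≤ j then d j else 0) := by
      intro r
      have h1 : (Finset.range L).filter (fun j => z r ≤ j) = Finset.Ico (z r) L := by
        ext j
        simp only [mem_filter, Finset.mem_range, Finset.mem_Ico]
        omega
      rw [← Finset.sum_filter, h1, tele ψ _ _ (hz r)]
      ring
    rw [Finset.sum_congr rfl (fun r _ => hrw r)]
    rw [Finset.sum_add_distrib, Finset.sum_const, Finset.sum_comm]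
    congr 1
    · simp [nsmul_eq_mul, Finset.card_univ]
    · apply Finset.sum_congr rfl
      intro j _
      rw [← Finset.sum_filter, Finset.sum_const, nsmul_eq_mul]
      have hc : (univ.filter (fun r => z r ≤ j)).card
          = Fintype.card R - nCount z (j + 1) := by
        have := Finset.card_filter_add_card_filter_not
          (s := (univ : Finset R)) (p := fun r => z r ≤ j)
        unfold nCount
        have hcompl : (univ.filter (fun r => ¬ z r ≤ j)) =
            (univ.filter (fun r => j + 1 ≤ z r)) := by
          ext r; simp only [mem_filter, mem_univ, true_and]; omega
        rw [← hcompl]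
        rw [Finset.card_univ] at this
        omega
      rw [hc, mul_comm]
  rw [key y hb, key y' hb']
  apply add_le_add_right
  apply Finset.sum_le_sum
  intro j _
  apply mul_le_mul_of_nonneg_left _ (hdpos j)
  have h1 : nCount y' (j + 1) ≤ nCount y (j + 1) := hdom (j + 1)
  have h2 : nCount y (j + 1) ≤ Fintype.card R := by
    unfold nCount
    rw [← Finset.card_univ]
    exact Finset.card_le_card (Finset.filter_subset _ _)
  exact_mod_cast Nat.sub_le_sub_left h1 (Fintype.card R)

end Aux

/-- there exists a feasible placement that simultaneously, for
every level `ℓ`, maximizes the number of requests placed at levels `≥ ℓ`; and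
any placement with this property is cost-optimal for every strictly decreasing
per-level cost `ψ`. -/
theorem stmt8 {R : Type*} [Fintype R] [DecidableEq R]
    (C : ℕ → ℕ) (h : R → ℕ)
    (hfe : ∃ y : R → ℕ, pFeasible C h y) :
    (∃ y : R → ℕ, pFeasible C h y ∧ ∀ ℓ : ℕ, ∀ y' : R → ℕ, pFeasible C h y' →
        (univ.filter (fun r => ℓ ≤ y' r)).card ≤ (univ.filter (fun r => ℓ ≤ y r)).card) ∧
    (∀ y : R → ℕ, pFeasible C h y →
      (∀ ℓ : ℕ, ∀ y' : R → ℕ, pFeasible C h y' →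
        (univ.filter (fun r => ℓ ≤ y' r)).card ≤ (univ.filter (fun r => ℓ ≤ y r)).card) →
      ∀ ψ : ℕ → ℝ, StrictAnti ψ → ∀ y' : R → ℕ, pFeasible C h y' →
        ∑ r, ψ (y r) ≤ ∑ r, ψ (y' r)) := by
  constructor
  · obtain ⟨y, hy, hmax⟩ := opt_exists C h hfe
    exact ⟨y, hy, fun ℓ y' hy' => hmax ℓ (Nat.zero_le _) y' hy'⟩
  · intro y hy hdom ψ hψ y' hy'
    exact cost_le C h y y' hy hy' (fun ℓ => hdom ℓ y' hy') ψ hψ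
end
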